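/- Let α ∈ ℝ, z = e^{iα}, and N ≥ 1. The matrix B_{α,N}, with rows indexed by J : Fin N → Fin 2 and columns indexed by triples (N0,N1,N2) of nonnegative integers with N0+N1+N2 = N, and with (J,(N0,N1,N2)) entry ∑_{L ∈ [N0,N1,N2]} ∏_{p<N} (A'_α)_{J(p),L(p)}, has rank N+1. -/

import Mathlib

open Complex Finset

/-- The matrix `A'_α` with rows `(1, 0, -e^{2iα})` and `(0, 1, e^{iα})`. -/
noncomputable def Amat' (α : ℝ) : Matrix (Fin 2) (Fin 3) ℂ :=
  !![1, 0, -Complex.exp (α * Complex.I) ^ 2;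
     0, 1, Complex.exp (α * Complex.I)]

/-- The number of coordinates of `L` equal to `i`. -/
def cnt {N : ℕ} (L : Fin N → Fin 3) (i : Fin 3) : ℕ :=
  (Finset.univ.filter fun p => L p = i).card

/-- Triples `(N0, N1, N2)` of nonnegative integers with `N0 + N1 + N2 = N`. -/
def Triple (N : ℕ) : Type := {t : ℕ × ℕ × ℕ // t.1 + t.2.1 + t.2.2 = N}

noncomputable instance (N : ℕ) : Fintype (Triple N) :=
  Fintype.ofInjective
    (fun t : Triple N =>
      ((⟨t.1.1, by have := t.2; omega⟩ : Fin (N + 1)),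
       (⟨t.1.2.1, by have := t.2; omega⟩ : Fin (N + 1)),
       (⟨t.1.2.2, by have := t.2; omega⟩ : Fin (N + 1))))
    (by
      rintro ⟨⟨a, b, c⟩, h⟩ ⟨⟨a', b', c'⟩, h'⟩ heq
      simp only [Prod.mk.injEq, Fin.mk.injEq] at heq
      exact Subtype.ext (by simp only [Prod.mk.injEq]; exact ⟨heq.1, heq.2.1, heq.2.2⟩))

/-- The matrix `B_{α,N}` with rows indexed by binary words of length `N` and
columns indexed by triples `(N0,N1,N2)` with `N0 + N1 + N2 = N`. -/
noncomputable def Bmat (α : ℝ) (N : ℕ) : Matrix (Fin N → Fin 2) (Triple N) ℂ :=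
  fun J t =>
    ∑ L ∈ Finset.univ.filter
        (fun L : Fin N → Fin 3 =>
          cnt L 0 = t.1.1 ∧ cnt L 1 = t.1.2.1 ∧ cnt L 2 = t.1.2.2),
      ∏ p : Fin N, Amat' α (J p) (L p)

def emb3 : Fin 2 → Fin 3 := fun j => ⟨j.1, by omega⟩

def k1 {N : ℕ} (J : Fin N → Fin 2) : ℕ := (Finset.univ.filter fun p => J p = 1).card

def Jk (N k : ℕ) : Fin N → Fin 2 := fun p => if (p : ℕ) < k then 1 else 0

lemma fin2_eq_zero (j : Fin 2) (h : ¬ j = 1) : j = 0 := by fin_cases j <;> simp_all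

lemma emb3_eq_one (j : Fin 2) : emb3 j = 1 ↔ j = 1 := by fin_cases j <;> simp [emb3]

lemma emb3_eq_zero (j : Fin 2) : emb3 j = 0 ↔ j = 0 := by fin_cases j <;> simp [emb3]

lemma emb3_ne_two (j : Fin 2) : emb3 j ≠ 2 := by fin_cases j <;> simp [emb3]

lemma k1_le {N : ℕ} (J : Fin N → Fin 2) : k1 J ≤ N := by
  have := Finset.card_filter_le (Finset.univ : Finset (Fin N)) (fun p => J p = 1)
  simpa [k1] using this

lemma k1_Jk {N k : ℕ} (hk : k ≤ N) : k1 (Jk N k) = k := by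
  unfold k1 Jk
  have h1 : (Finset.univ.filter fun p : Fin N => (if (p:ℕ) < k then (1:Fin 2) else 0) = 1)
      = Finset.univ.filter fun p : Fin N => (p:ℕ) < k := by
    apply Finset.filter_congr; intro p _; by_cases h : (p:ℕ) < k <;> simp [h]
  rw [h1]
  conv_rhs => rw [← Finset.card_range k]
  refine Finset.card_bij' (fun p _ => (p:ℕ))
    (fun a ha => (⟨a, lt_of_lt_of_le (Finset.mem_range.mp ha) hk⟩ : Fin N)) ?_ ?_ ?_ ?_
  · intro a ha; simp only [mem_filter, mem_univ, true_and] at ha; exact Finset.mem_range.mpr ha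
  · intro a ha; simp [Finset.mem_range.mp ha]
  · intro a _; rfl
  · intro a _; rfl

lemma cnt_comp {N : ℕ} (L : Fin N → Fin 3) (σ : Equiv.Perm (Fin N)) (i : Fin 3) :
    cnt (L ∘ σ) i = cnt L i := by
  unfold cnt
  rw [Finset.card_filter, Finset.card_filter]
  exact Equiv.sum_comp σ (fun p => if L p = i then 1 else 0)

lemma Bmat_perm (α : ℝ) {N : ℕ} (J : Fin N → Fin 2) (σ : Equiv.Perm (Fin N)) (t : Triple N) :
    Bmat α N (J ∘ σ) t = Bmat α N J t := by
  classical
  unfold Bmat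
  rw [Finset.sum_filter, Finset.sum_filter]
  refine Fintype.sum_equiv (Equiv.arrowCongr σ (Equiv.refl (Fin 3))) _ _ (fun L => ?_)
  have he : (Equiv.arrowCongr σ (Equiv.refl (Fin 3))) L = L ∘ σ.symm := by
    funext p; simp [Equiv.arrowCongr]
  rw [he]
  have h1 : ∀ i, cnt (L ∘ σ.symm) i = cnt L i := fun i => cnt_comp L σ.symm i
  have h2 : (∏ p, Amat' α ((J ∘ σ) p) (L p)) = ∏ p, Amat' α (J p) ((L ∘ σ.symm) p) := by
    rw [← Equiv.prod_comp σ (fun p => Amat' α (J p) ((L ∘ σ.symm) p))]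
    apply Finset.prod_congr rfl
    intro p _
    simp [Function.comp]
  rw [h1 0, h1 1, h1 2, h2]

lemma Amat'_eq (α : ℝ) (j : Fin 2) (l : Fin 3) (hl : l ≠ 2) :
    Amat' α j l = if l = emb3 j then 1 else 0 := by
  fin_cases j <;> fin_cases l <;> simp_all [Amat', emb3]

lemma Bcol (α : ℝ) {N : ℕ} (J : Fin N → Fin 2) (m : ℕ) (hm : m ≤ N)
    (h : (N - m) + m + 0 = N) :
    Bmat α N J ⟨(N - m, m, 0), h⟩ = if k1 J = m then 1 else 0 := by
  classical
  unfold Bmat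
  have step1 : ∀ L ∈ Finset.univ.filter (fun L : Fin N → Fin 3 =>
      cnt L 0 = N - m ∧ cnt L 1 = m ∧ cnt L 2 = 0),
      (∏ p, Amat' α (J p) (L p)) = if L = emb3 ∘ J then 1 else 0 := by
    intro L hL
    simp only [mem_filter, mem_univ, true_and] at hL
    have hL2 : ∀ p, L p ≠ 2 := by
      intro p hp
      have he : (Finset.univ.filter fun q => L q = (2:Fin 3)) = ∅ :=
        Finset.card_eq_zero.mp hL.2.2
      have := Finset.eq_empty_iff_forall_notMem.mp he p
      simp [hp] at this
    rw [Finset.prod_congr rfl (fun p _ => Amat'_eq α (J p) (L p) (hL2 p)), Finset.prod_boole]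
    congr 1
    simp only [mem_univ, forall_true_left, eq_iff_iff]
    constructor
    · intro hall; funext p; exact hall p
    · intro hfe p; rw [hfe]; rfl
  rw [Finset.sum_congr rfl step1, Finset.sum_ite_eq' _ (emb3 ∘ J) (fun _ => 1)]
  have hc1 : cnt (emb3 ∘ J) 1 = k1 J := by
    unfold cnt k1
    congr 1
    apply Finset.filter_congr
    intro p _
    simpa using emb3_eq_one (J p)
  have hc2 : cnt (emb3 ∘ J) 2 = 0 := by
    unfold cnt
    rw [Finset.card_eq_zero, Finset.filter_eq_empty_iff]
    intro p _
    exact emb3_ne_two (J p)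
  have hc0 : cnt (emb3 ∘ J) 0 = N - k1 J := by
    unfold cnt
    have he : (Finset.univ.filter fun p => (emb3 ∘ J) p = 0)
        = Finset.univ.filter fun p => ¬ (J p = 1) := by
      apply Finset.filter_congr
      intro p _
      simp only [Function.comp]
      rw [emb3_eq_zero (J p)]
      constructor
      · intro h0 h1; rw [h0] at h1; exact absurd h1 (by decide)
      · intro h1; exact fin2_eq_zero _ h1
    rw [he]
    have hsum := Finset.card_filter_add_card_filter_not
      (s := (Finset.univ : Finset (Fin N))) (fun p => J p = 1)
    have hcu : (Finset.univ : Finset (Fin N)).card = N := by simp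
    unfold k1
    omega
  simp only [mem_filter, mem_univ, true_and, hc0, hc1, hc2]
  have hk1 := k1_le J
  by_cases hkm : k1 J = m
  · simp [hkm]
  · have : ¬ (N - k1 J = N - m ∧ k1 J = m ∧ 0 = 0) := by
      intro ⟨_, h2, _⟩; exact hkm h2
    simp [this, hkm]

lemma exists_perm {N : ℕ} (J : Fin N → Fin 2) :
    ∃ σ : Equiv.Perm (Fin N), J ∘ σ = Jk N (k1 J) := by
  classical
  set k := k1 J with hk
  have hcard : Fintype.card {p // Jk N k p = 1} = Fintype.card {p // J p = 1} := by
    rw [Fintype.card_subtype, Fintype.card_subtype]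
    have h1 : (Finset.filter (fun p => Jk N k p = 1) Finset.univ).card = k1 (Jk N k) := rfl
    have h2 : (Finset.filter (fun p => J p = 1) Finset.univ).card = k1 J := rfl
    rw [h1, h2, k1_Jk (k1_le J)]
  have hcard' : Fintype.card {p // ¬ Jk N k p = 1} = Fintype.card {p // ¬ J p = 1} := by
    rw [Fintype.card_subtype_compl, Fintype.card_subtype_compl, hcard]
  let e1 : {p // Jk N k p = 1} ≃ {p // J p = 1} := Fintype.equivOfCardEq hcard
  let e2 : {p // ¬ Jk N k p = 1} ≃ {p // ¬ J p = 1} := Fintype.equivOfCardEq hcard'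
  refine ⟨((Equiv.sumCompl (fun p => Jk N k p = 1)).symm.trans
    ((Equiv.sumCongr e1 e2).trans (Equiv.sumCompl (fun p => J p = 1)))), ?_⟩
  funext p
  simp only [Function.comp, Equiv.trans_apply]
  by_cases h : Jk N k p = 1
  · rw [Equiv.sumCompl_symm_apply_of_pos (p := fun q => Jk N k q = 1) h]
    simp only [Equiv.sumCongr_apply, Sum.map_inl, Equiv.sumCompl_apply_inl]
    rw [h]
    exact (e1 ⟨p, h⟩).2
  · rw [Equiv.sumCompl_symm_apply_of_neg (p := fun q => Jk N k q = 1) h]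
    simp only [Equiv.sumCongr_apply, Sum.map_inr, Equiv.sumCompl_apply_inr]
    rw [fin2_eq_zero _ h]
    exact fin2_eq_zero _ (e2 ⟨p, h⟩).2

/-- The matrix `B_{α,N}` has rank `N + 1`. -/
theorem B_rank (α : ℝ) (N : ℕ) (hN : 1 ≤ N) : (Bmat α N).rank = N + 1 := by
  classical
  set P : Matrix (Fin N → Fin 2) (Fin (N+1)) ℂ :=
    fun J k => if (k : ℕ) = k1 J then 1 else 0 with hP
  set C : Matrix (Fin (N+1)) (Triple N) ℂ :=
    fun k t => Bmat α N (Jk N (k : ℕ)) t with hC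
  have hB_row : ∀ (J : Fin N → Fin 2) (t : Triple N),
      Bmat α N J t = Bmat α N (Jk N (k1 J)) t := by
    intro J t
    obtain ⟨σ, hσ⟩ := exists_perm J
    rw [← hσ, Bmat_perm]
  have hfac : Bmat α N = P * C := by
    funext J t
    rw [Matrix.mul_apply]
    have hstep : ∀ k : Fin (N+1), P J k * C k t
        = if k = (⟨k1 J, by have := k1_le J; omega⟩ : Fin (N+1)) then C k t else 0 := by
      intro k
      by_cases h : (k : ℕ) = k1 J
      · have : k = (⟨k1 J, by have := k1_le J; omega⟩ : Fin (N+1)) := by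
          apply Fin.ext; simpa using h
        simp [hP, h, this]
      · have : k ≠ (⟨k1 J, by have := k1_le J; omega⟩ : Fin (N+1)) := by
          intro he; apply h; rw [he]
        simp [hP, h, this]
    rw [Finset.sum_congr rfl (fun k _ => hstep k),
      Finset.sum_ite_eq' _ _ (fun k => C k t)]
    simp only [mem_univ, if_true, hC]
    exact hB_row J t
  have hupper : (Bmat α N).rank ≤ N + 1 := by
    rw [hfac]
    calc (P * C).rank ≤ C.rank := Matrix.rank_mul_le_right P C
    _ ≤ Fintype.card (Fin (N+1)) := Matrix.rank_le_card_height C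
    _ = N + 1 := by simp
  set X : Matrix (Fin (N+1)) (Fin N → Fin 2) ℂ :=
    fun k J => if J = Jk N (k : ℕ) then 1 else 0 with hX
  set Y : Matrix (Triple N) (Fin (N+1)) ℂ :=
    fun t m => if t = (⟨(N - (m:ℕ), ((m:ℕ), 0)), by have := m.isLt; show N - (m:ℕ) + (m:ℕ) + 0 = N; omega⟩ : Triple N)
      then 1 else 0 with hY
  have hXY : X * Bmat α N * Y = 1 := by
    funext k m
    have hm : (m : ℕ) ≤ N := by have := m.isLt; omega
    have hXB : ∀ t : Triple N, (X * Bmat α N) k t = Bmat α N (Jk N (k : ℕ)) t := by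
      intro t
      rw [Matrix.mul_apply]
      have : ∀ J : Fin N → Fin 2, X k J * Bmat α N J t
          = if J = Jk N (k : ℕ) then Bmat α N J t else 0 := by
        intro J
        by_cases h : J = Jk N (k : ℕ) <;> simp [hX, h]
      rw [Finset.sum_congr rfl (fun J _ => this J),
        Finset.sum_ite_eq' _ _ (fun J => Bmat α N J t)]
      simp
    show (X * Bmat α N * Y) k m = (1 : Matrix (Fin (N+1)) (Fin (N+1)) ℂ) k m
    rw [Matrix.mul_apply]
    have hstep : ∀ t : Triple N, (X * Bmat α N) k t * Y t m
        = if t = (⟨(N - (m:ℕ), ((m:ℕ), 0)), by have := m.isLt; show N - (m:ℕ) + (m:ℕ) + 0 = N; omega⟩ : Triple N)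
          then (X * Bmat α N) k t else 0 := by
      intro t
      by_cases h : t = (⟨(N - (m:ℕ), ((m:ℕ), 0)), by have := m.isLt; show N - (m:ℕ) + (m:ℕ) + 0 = N; omega⟩ : Triple N) <;>
        simp [hY, h]
    rw [Finset.sum_congr rfl (fun t _ => hstep t)]
    erw [Finset.sum_ite_eq' _ _ (fun t => (X * Bmat α N) k t)]
    erw [if_pos (Finset.mem_univ _)]
    erw [hXB, Bcol α (Jk N (k : ℕ)) (m : ℕ) hm, k1_Jk (by have := k.isLt; omega)]
    rw [Matrix.one_apply]
    by_cases h : (k : ℕ) = (m : ℕ)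
    · simp [h, Fin.ext_iff]
    · simp [h, Fin.ext_iff]
  have hlower : N + 1 ≤ (Bmat α N).rank := by
    have h1 : (X * Bmat α N * Y).rank ≤ (Bmat α N).rank :=
      le_trans (Matrix.rank_mul_le_left (X * Bmat α N) Y)
        (Matrix.rank_mul_le_right X (Bmat α N))
    rw [hXY, Matrix.rank_one] at h1
    simpa using h1
  omega
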